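/- Let $M_1, \ldots, M_k$ be pairwise edge-disjoint matchings in a graph $G$. Then there exist pairwise edge-disjoint matchings $M_1', \ldots, M_k'$ in $G$ with $\bigcup_i M_i' = \bigcup_i M_i$ (as edge sets) such that the sizes of any two of the $M_i'$ differ by at most one. -/

import Mathlib

/-- A set of edges is a matching if its edges are pairwise vertex-disjoint. -/
def IsMatchingEdgeSet {V : Type*} (M : Finset (Sym2 V)) : Prop :=
  (∀ e ∈ M, ¬ e.IsDiag) ∧ ∀ e ∈ M, ∀ f ∈ M, e ≠ f → ∀ v : V, ¬(v ∈ e ∧ v ∈ f)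

namespace Balancing
set_option linter.unusedSectionVars false

variable {V : Type*} [DecidableEq V]

/-- the two endpoints of an edge, as a finset -/
def evtx (e : Sym2 V) : Finset V :=
  Sym2.lift ⟨fun a b => {a, b}, fun a b => Finset.pair_comm a b⟩ e

@[simp] lemma mem_evtx {v : V} {e : Sym2 V} : v ∈ evtx e ↔ v ∈ e := by
  induction e using Sym2.ind with
  | _ a b => simp [evtx, Sym2.mem_iff]

lemma card_evtx_le (e : Sym2 V) : (evtx e).card ≤ 2 := by
  induction e using Sym2.ind with
  | _ a b => exact (Finset.card_insert_le _ _).trans (by simp)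

lemma card_evtx (e : Sym2 V) (h : ¬ e.IsDiag) : (evtx e).card = 2 := by
  induction e using Sym2.ind with
  | _ a b =>
    rw [Sym2.isDiag_iff_proj_eq] at h
    simp [evtx, Finset.card_insert_of_notMem, h]

/-- vertices covered by an edge set -/
def vtx (C : Finset (Sym2 V)) : Finset V := C.biUnion evtx

lemma vtx_mono {C D : Finset (Sym2 V)} (h : C ⊆ D) : vtx C ⊆ vtx D :=
  Finset.biUnion_subset_biUnion_of_subset_left _ h

/-- one step: f is in S and shares a vertex with e -/
def Stp (S : Finset (Sym2 V)) (e f : Sym2 V) : Prop := f ∈ S ∧ ∃ v : V, v ∈ e ∧ v ∈ f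

def Reach (S : Finset (Sym2 V)) (e f : Sym2 V) : Prop := Relation.ReflTransGen (Stp S) e f

def ReachN (S : Finset (Sym2 V)) : ℕ → Sym2 V → Sym2 V → Prop
  | 0, e, f => e = f
  | (n+1), e, f => ∃ g, ReachN S n e g ∧ Stp S g f

lemma reach_iff {S : Finset (Sym2 V)} {e f : Sym2 V} :
    Reach S e f ↔ ∃ n, ReachN S n e f := by
  constructor
  · intro h
    induction h with
    | refl => exact ⟨0, rfl⟩
    | tail _ hstep ih => exact ⟨ih.choose + 1, _, ih.choose_spec, hstep⟩
  · rintro ⟨n, h⟩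
    induction n generalizing f with
    | zero => cases h; exact Relation.ReflTransGen.refl
    | succ n ih => obtain ⟨g, hg, hstep⟩ := h; exact (ih hg).tail hstep

lemma reachN_mem {S : Finset (Sym2 V)} {e f : Sym2 V} {n : ℕ} (he : e ∈ S)
    (h : ReachN S n e f) : f ∈ S := by
  cases n with
  | zero => cases h; exact he
  | succ n => exact h.choose_spec.2.1

lemma reach_mem {S : Finset (Sym2 V)} {e f : Sym2 V} (he : e ∈ S)
    (h : Reach S e f) : f ∈ S := by
  obtain ⟨n, h⟩ := reach_iff.mp h; exact reachN_mem he h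

lemma reach_symm {S : Finset (Sym2 V)} {e f : Sym2 V} (he : e ∈ S)
    (h : Reach S e f) : Reach S f e := by
  induction h with
  | refl => exact Relation.ReflTransGen.refl
  | tail hb hstep ih =>
    obtain ⟨hc, v, hvb, hvc⟩ := hstep
    exact Relation.ReflTransGen.trans
      (Relation.ReflTransGen.single ⟨reach_mem he hb, v, hvc, hvb⟩) ih

end Balancing

namespace Balancing

variable {V : Type*} [DecidableEq V]

/-- Key counting lemma: a connected edge set on `n` edges covers at most `n+1` vertices. -/
lemma vtx_card_le_conn : ∀ (n : ℕ) (C : Finset (Sym2 V)) (e₀ : Sym2 V), C.card = n →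
    e₀ ∈ C → (∀ f ∈ C, Reach C e₀ f) → (vtx C).card ≤ C.card + 1 := by
  intro n
  induction n using Nat.strong_induction_on with
  | _ n IH =>
    intro C e₀ hcard he₀ hconn
    -- distance function
    set d : Sym2 V → ℕ := fun f => sInf {m | ReachN C m e₀ f} with hd
    have hdex : ∀ f ∈ C, {m | ReachN C m e₀ f}.Nonempty := by
      intro f hf
      obtain ⟨m, hm⟩ := reach_iff.mp (hconn f hf)
      exact ⟨m, hm⟩
    have hdspec : ∀ f ∈ C, ReachN C (d f) e₀ f := fun f hf => Nat.sInf_mem (hdex f hf)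
    have hd0 : d e₀ = 0 := Nat.le_zero.mp (Nat.sInf_le (by exact rfl : ReachN C 0 e₀ e₀))
    by_cases hsmall : C.card ≤ 1
    · -- C = {e₀}
      have : C = {e₀} :=
        Finset.eq_singleton_iff_unique_mem.mpr ⟨he₀, fun f hf => by
          by_contra hne
          have := Finset.one_lt_card.mpr ⟨f, hf, e₀, he₀, hne⟩
          omega⟩
      subst this
      simpa [vtx] using (card_evtx_le e₀).trans (by simp)
    · push_neg at hsmall
      obtain ⟨e, heC, hemax⟩ := Finset.exists_max_image C d ⟨e₀, he₀⟩
      have hdpos : 1 ≤ d e := by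
        rcases Nat.eq_zero_or_pos (d e) with h0 | h; swap; · exact h
        -- all distances 0 ⇒ C = {e₀}, contradiction with card ≥ 2
        exfalso
        have hall : ∀ f ∈ C, f = e₀ := by
          intro f hf
          have : d f = 0 := Nat.le_zero.mp (h0 ▸ hemax f hf)
          have h2 := hdspec f hf
          rw [this] at h2
          exact h2.symm
        obtain ⟨f, hf, g, hg, hne⟩ := Finset.one_lt_card.mp hsmall
        exact hne ((hall f hf).trans (hall g hg).symm)
      have hene : e ≠ e₀ := fun h => by rw [h, hd0] at hdpos; omega
      -- every other edge reachable avoiding e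
      have claimA : ∀ m, ∀ f ∈ C, f ≠ e → ReachN C m e₀ f → Reach (C.erase e) e₀ f := by
        intro m
        induction m using Nat.strong_induction_on with
        | _ m IHm =>
          intro f hf hfe hreach
          have hle : d f ≤ m := Nat.sInf_le hreach
          have hmin := hdspec f hf
          rcases hk : d f with _ | m'
          · rw [hk] at hmin
            exact hmin ▸ Relation.ReflTransGen.refl
          · rw [hk] at hmin
            obtain ⟨g, hg, hstep⟩ := hmin
            have hgC : g ∈ C := reachN_mem he₀ hg
            have hge : g ≠ e := by
              intro h
              have h1 : d e ≤ m' := Nat.sInf_le (h ▸ hg)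
              have h2 : d f ≤ d e := hemax f hf
              omega
            have := IHm m' (by omega) g hgC hge hg
            exact this.tail ⟨Finset.mem_erase.mpr ⟨hfe, hf⟩, hstep.2⟩
      -- e shares a vertex with some edge of C.erase e
      have hmin := hdspec e heC
      rcases hk : d e with _ | m'
      · omega
      rw [hk] at hmin
      obtain ⟨g, hg, hstep⟩ := hmin
      have hgC : g ∈ C := reachN_mem he₀ hg
      have hge : g ≠ e := by
        intro h
        have : d e ≤ m' := Nat.sInf_le (h ▸ hg)
        omega
      obtain ⟨v, hvg, hve⟩ := hstep.2
      have hgErase : g ∈ C.erase e := Finset.mem_erase.mpr ⟨hge, hgC⟩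
      have hvErase : v ∈ vtx (C.erase e) :=
        Finset.mem_biUnion.mpr ⟨g, hgErase, mem_evtx.mpr hvg⟩
      have hcardErase : (C.erase e).card = C.card - 1 := Finset.card_erase_of_mem heC
      have herase : (vtx (C.erase e)).card ≤ (C.erase e).card + 1 := by
        refine IH (C.erase e).card (by omega) (C.erase e) e₀ rfl
          (Finset.mem_erase.mpr ⟨Ne.symm hene, he₀⟩) ?_
        intro f hf
        obtain ⟨hfe, hfC⟩ := Finset.mem_erase.mp hf
        obtain ⟨m, hm⟩ := reach_iff.mp (hconn f hfC)
        exact claimA m f hfC hfe hm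
      have hsub2 : vtx C ⊆ evtx e ∪ vtx (C.erase e) := by
        intro w hw
        obtain ⟨f, hf, hwf⟩ := Finset.mem_biUnion.mp hw
        by_cases hfe : f = e
        · exact Finset.mem_union_left _ (hfe ▸ hwf)
        · exact Finset.mem_union_right _
            (Finset.mem_biUnion.mpr ⟨f, Finset.mem_erase.mpr ⟨hfe, hf⟩, hwf⟩)
      have h3 : (evtx e \ vtx (C.erase e)).card ≤ 1 := by
        have hsub3 : evtx e \ vtx (C.erase e) ⊆ (evtx e).erase v := by
          intro w hw
          obtain ⟨hw1, hw2⟩ := Finset.mem_sdiff.mp hw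
          exact Finset.mem_erase.mpr ⟨fun h => hw2 (h ▸ hvErase), hw1⟩
        have := Finset.card_le_card hsub3
        rw [Finset.card_erase_of_mem (mem_evtx.mpr hve)] at this
        have := card_evtx_le e
        omega
      have h4 := Finset.card_le_card hsub2
      rw [← Finset.card_sdiff_add_card (evtx e) (vtx (C.erase e))] at h4
      omega

end Balancing

namespace Balancing

variable {V : Type*} [DecidableEq V]

/-- the connected component of `e` inside the edge set `S` -/
noncomputable def comp (S : Finset (Sym2 V)) (e : Sym2 V) : Finset (Sym2 V) :=
  @Finset.filter _ (Reach S e) (Classical.decPred _) S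

lemma mem_comp {S : Finset (Sym2 V)} {e f : Sym2 V} :
    f ∈ comp S e ↔ f ∈ S ∧ Reach S e f := by
  simp [comp, Finset.mem_filter]

lemma comp_subset {S : Finset (Sym2 V)} {e : Sym2 V} : comp S e ⊆ S :=
  fun _ h => (mem_comp.mp h).1

lemma mem_comp_self {S : Finset (Sym2 V)} {e : Sym2 V} (he : e ∈ S) : e ∈ comp S e :=
  mem_comp.mpr ⟨he, Relation.ReflTransGen.refl⟩

lemma comp_eq_of_mem {S : Finset (Sym2 V)} {e f : Sym2 V} (he : e ∈ S)
    (hf : f ∈ comp S e) : comp S f = comp S e := by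
  obtain ⟨hfS, hef⟩ := mem_comp.mp hf
  have hfe : Reach S f e := reach_symm he hef
  ext g
  simp only [mem_comp]
  exact ⟨fun ⟨hg, h⟩ => ⟨hg, hef.trans h⟩, fun ⟨hg, h⟩ => ⟨hg, hfe.trans h⟩⟩

lemma comp_closed {S : Finset (Sym2 V)} {e₀ e f : Sym2 V} (he : e ∈ comp S e₀)
    (hf : f ∈ S) (hshare : ∃ v : V, v ∈ e ∧ v ∈ f) : f ∈ comp S e₀ := by
  obtain ⟨heS, hreach⟩ := mem_comp.mp he
  exact mem_comp.mpr ⟨hf, hreach.tail ⟨hf, hshare⟩⟩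

/-- reachability in S implies reachability within the component -/
lemma reach_comp {S : Finset (Sym2 V)} {e₀ f : Sym2 V} (h : Reach S e₀ f) :
    Reach (comp S e₀) e₀ f := by
  induction h with
  | refl => exact Relation.ReflTransGen.refl
  | @tail b c hb hstep ih =>
    refine ih.tail ⟨mem_comp.mpr ⟨hstep.1, hb.tail hstep⟩, hstep.2⟩

/-- a matching on m edges covers exactly 2m vertices -/
lemma two_mul_card_le_vtx {M : Finset (Sym2 V)} (hM : IsMatchingEdgeSet M) :
    2 * M.card ≤ (vtx M).card := by
  have : (vtx M).card = ∑ e ∈ M, (evtx e).card := by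
    refine Finset.card_biUnion ?_
    intro e he f hf hne
    rw [Function.onFun, Finset.disjoint_left]
    intro v hv hv'
    exact hM.2 e he f hf hne v ⟨mem_evtx.mp hv, mem_evtx.mp hv'⟩
  rw [this, Finset.sum_congr rfl fun e he => card_evtx e (hM.1 e he)]
  simp [mul_comm]

lemma matching_subset {M N : Finset (Sym2 V)} (h : N ⊆ M) (hM : IsMatchingEdgeSet M) :
    IsMatchingEdgeSet N :=
  ⟨fun e he => hM.1 e (h he), fun e he f hf => hM.2 e (h he) f (h hf)⟩

/-- The swap lemma. -/
lemma swap {A B : Finset (Sym2 V)} (hA : IsMatchingEdgeSet A) (hB : IsMatchingEdgeSet B)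
    (hd : Disjoint A B) (hc : B.card + 2 ≤ A.card) :
    ∃ A' B' : Finset (Sym2 V), IsMatchingEdgeSet A' ∧ IsMatchingEdgeSet B' ∧
      Disjoint A' B' ∧ A' ∪ B' = A ∪ B ∧ A'.card + 1 = A.card ∧ B'.card = B.card + 1 := by
  classical
  set S := A ∪ B with hS
  set P : Finset (Finset (Sym2 V)) := S.image (comp S) with hP
  have hPdisj : ∀ C ∈ P, ∀ D ∈ P, C ≠ D → Disjoint C D := by
    intro C hC D hD hne
    obtain ⟨e, heS, rfl⟩ := Finset.mem_image.mp hC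
    obtain ⟨f, hfS, rfl⟩ := Finset.mem_image.mp hD
    rw [Finset.disjoint_left]
    intro g hg hg'
    exact hne ((comp_eq_of_mem heS hg).symm.trans (comp_eq_of_mem hfS hg'))
  have hTcard : ∀ T : Finset (Sym2 V), T ⊆ S → T.card = ∑ C ∈ P, (C ∩ T).card := by
    intro T hT
    have hTeq : T = P.biUnion (fun C => C ∩ T) := by
      ext g
      simp only [Finset.mem_biUnion, Finset.mem_inter]
      constructor
      · intro hg
        exact ⟨comp S g, Finset.mem_image_of_mem _ (hT hg), mem_comp_self (hT hg), hg⟩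
      · rintro ⟨C, _, _, hg⟩; exact hg
    conv_lhs => rw [hTeq]
    refine Finset.card_biUnion ?_
    intro C hC D hD hne
    exact Finset.disjoint_left.mpr fun g hg hg' =>
      Finset.disjoint_left.mp (hPdisj C hC D hD hne) (Finset.mem_inter.mp hg).1
        (Finset.mem_inter.mp hg').1
  have hAcard := hTcard A Finset.subset_union_left
  have hBcard := hTcard B Finset.subset_union_right
  have hex : ∃ C ∈ P, (C ∩ B).card < (C ∩ A).card := by
    apply Finset.exists_lt_of_sum_lt
    rw [← hAcard, ← hBcard]; omega
  obtain ⟨C, hCP, hlt⟩ := hex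
  obtain ⟨e₀, he₀S, rfl⟩ := Finset.mem_image.mp hCP
  set C := comp S e₀
  -- C splits into its A-part and B-part
  have hCsplit : C.card = (C ∩ A).card + (C ∩ B).card := by
    have h1 : C ∩ A ∪ C ∩ B = C := by
      rw [← Finset.inter_union_distrib_left]
      exact Finset.inter_eq_left.mpr comp_subset
    have h2 : Disjoint (C ∩ A) (C ∩ B) :=
      hd.mono Finset.inter_subset_right Finset.inter_subset_right
    rw [← Finset.card_union_of_disjoint h2, h1]
  -- vertex counting within the component
  have hconn : ∀ f ∈ C, Reach C e₀ f := fun f hf => reach_comp (mem_comp.mp hf).2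
  have hCvtx : (vtx C).card ≤ C.card + 1 :=
    vtx_card_le_conn C.card C e₀ rfl (mem_comp_self he₀S) hconn
  have hCA : 2 * (C ∩ A).card ≤ (vtx C).card := by
    refine le_trans (two_mul_card_le_vtx (matching_subset Finset.inter_subset_right hA)) ?_
    exact Finset.card_le_card (vtx_mono Finset.inter_subset_left)
  have hkey : (C ∩ A).card = (C ∩ B).card + 1 := by omega
  refine ⟨(A \ C) ∪ (C ∩ B), (B \ C) ∪ (C ∩ A), ?_, ?_, ?_, ?_, ?_, ?_⟩
  · -- A' is a matching
    constructor
    · intro e he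
      rcases Finset.mem_union.mp he with h | h
      · exact hA.1 e (Finset.mem_sdiff.mp h).1
      · exact hB.1 e (Finset.mem_inter.mp h).2
    · intro e he f hf hne v ⟨hve, hvf⟩
      rcases Finset.mem_union.mp he with he' | he' <;>
        rcases Finset.mem_union.mp hf with hf' | hf'
      · exact hA.2 e (Finset.mem_sdiff.mp he').1 f (Finset.mem_sdiff.mp hf').1 hne v ⟨hve, hvf⟩
      · exact (Finset.mem_sdiff.mp he').2 (comp_closed (Finset.mem_inter.mp hf').1
          (Finset.mem_union_left _ (Finset.mem_sdiff.mp he').1) ⟨v, hvf, hve⟩)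
      · exact (Finset.mem_sdiff.mp hf').2 (comp_closed (Finset.mem_inter.mp he').1
          (Finset.mem_union_left _ (Finset.mem_sdiff.mp hf').1) ⟨v, hve, hvf⟩)
      · exact hB.2 e (Finset.mem_inter.mp he').2 f (Finset.mem_inter.mp hf').2 hne v ⟨hve, hvf⟩
  · -- B' is a matching
    constructor
    · intro e he
      rcases Finset.mem_union.mp he with h | h
      · exact hB.1 e (Finset.mem_sdiff.mp h).1
      · exact hA.1 e (Finset.mem_inter.mp h).2
    · intro e he f hf hne v ⟨hve, hvf⟩
      rcases Finset.mem_union.mp he with he' | he' <;>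
        rcases Finset.mem_union.mp hf with hf' | hf'
      · exact hB.2 e (Finset.mem_sdiff.mp he').1 f (Finset.mem_sdiff.mp hf').1 hne v ⟨hve, hvf⟩
      · exact (Finset.mem_sdiff.mp he').2 (comp_closed (Finset.mem_inter.mp hf').1
          (Finset.mem_union_right _ (Finset.mem_sdiff.mp he').1) ⟨v, hvf, hve⟩)
      · exact (Finset.mem_sdiff.mp hf').2 (comp_closed (Finset.mem_inter.mp he').1
          (Finset.mem_union_right _ (Finset.mem_sdiff.mp hf').1) ⟨v, hve, hvf⟩)
      · exact hA.2 e (Finset.mem_inter.mp he').2 f (Finset.mem_inter.mp hf').2 hne v ⟨hve, hvf⟩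
  · -- disjoint
    rw [Finset.disjoint_left]
    intro e he he'
    rcases Finset.mem_union.mp he with h1 | h1 <;> rcases Finset.mem_union.mp he' with h2 | h2
    · exact Finset.disjoint_left.mp hd (Finset.mem_sdiff.mp h1).1 (Finset.mem_sdiff.mp h2).1
    · exact (Finset.mem_sdiff.mp h1).2 (Finset.mem_inter.mp h2).1
    · exact (Finset.mem_sdiff.mp h2).2 (Finset.mem_inter.mp h1).1
    · exact Finset.disjoint_left.mp hd (Finset.mem_inter.mp h2).2 (Finset.mem_inter.mp h1).2
  · -- union
    ext e
    have hCS : e ∈ C → e ∈ A ∨ e ∈ B := fun h => Finset.mem_union.mp (comp_subset h)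
    have hSmem : ∀ x : Sym2 V, x ∈ S ↔ x ∈ A ∨ x ∈ B := fun x => Finset.mem_union
    simp only [Finset.mem_union, Finset.mem_sdiff, Finset.mem_inter, hSmem]
    by_cases hC : e ∈ C <;> constructor <;> intro h <;> tauto
  · -- card A'
    have hdisj' : Disjoint (A \ C) (C ∩ B) := by
      rw [Finset.disjoint_left]
      intro e he he'
      exact (Finset.mem_sdiff.mp he).2 (Finset.mem_inter.mp he').1
    rw [Finset.card_union_of_disjoint hdisj']
    have := Finset.card_sdiff_add_card_inter A C
    rw [Finset.inter_comm A C] at this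
    omega
  · -- card B'
    have hdisj' : Disjoint (B \ C) (C ∩ A) := by
      rw [Finset.disjoint_left]
      intro e he he'
      exact (Finset.mem_sdiff.mp he).2 (Finset.mem_inter.mp he').1
    rw [Finset.card_union_of_disjoint hdisj']
    have := Finset.card_sdiff_add_card_inter B C
    rw [Finset.inter_comm B C] at this
    omega

lemma main_aux {V : Type*} [Fintype V] [DecidableEq V]
    (G : SimpleGraph V) [DecidableRel G.Adj] (k : ℕ) :
    ∀ N : ℕ, ∀ M : Fin k → Finset (Sym2 V),
    (∀ i, M i ⊆ G.edgeFinset) →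
    (∀ i, IsMatchingEdgeSet (M i)) →
    (∀ i j, i ≠ j → Disjoint (M i) (M j)) →
    (∑ i, (M i).card ^ 2) < N →
    ∃ M' : Fin k → Finset (Sym2 V),
      (∀ i, M' i ⊆ G.edgeFinset) ∧
      (∀ i, IsMatchingEdgeSet (M' i)) ∧
      (∀ i j, i ≠ j → Disjoint (M' i) (M' j)) ∧
      Finset.univ.biUnion M' = Finset.univ.biUnion M ∧
      (∀ i j, (M' i).card ≤ (M' j).card + 1) := by
  intro N
  induction N with
  | zero => intro M _ _ _ h; omega
  | succ N ih =>
    intro M hsub hmatch hdisj hΦ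
    by_cases hbal : ∀ i j, (M i).card ≤ (M j).card + 1
    · exact ⟨M, hsub, hmatch, hdisj, rfl, hbal⟩
    · push_neg at hbal
      obtain ⟨i, j, hij⟩ := hbal
      have hc : (M j).card + 2 ≤ (M i).card := by omega
      have hne : i ≠ j := by
        intro h; rw [h] at hc; omega
      obtain ⟨A', B', hA'm, hB'm, hA'B', hunion, hcardA, hcardB⟩ :=
        swap (hmatch i) (hmatch j) (hdisj i j hne) hc
      set M₂ : Fin k → Finset (Sym2 V) :=
        fun l => if l = i then A' else if l = j then B' else M l with hM₂
      have hM₂i : M₂ i = A' := by simp [hM₂]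
      have hM₂j : M₂ j = B' := by simp [hM₂, hne.symm]
      have hM₂other : ∀ l, l ≠ i → l ≠ j → M₂ l = M l := by
        intro l h1 h2; simp [hM₂, h1, h2]
      have hsubAB : ∀ e, e ∈ A' ∨ e ∈ B' → e ∈ M i ∨ e ∈ M j := by
        intro e he
        have : e ∈ A' ∪ B' := Finset.mem_union.mpr he
        rw [hunion] at this
        exact Finset.mem_union.mp this
      have hsubAB' : ∀ e, e ∈ M i ∨ e ∈ M j → e ∈ A' ∨ e ∈ B' := by
        intro e he
        have : e ∈ A' ∪ B' := hunion ▸ Finset.mem_union.mpr he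
        exact Finset.mem_union.mp this
      -- hypotheses for M₂
      have hsub2 : ∀ l, M₂ l ⊆ G.edgeFinset := by
        intro l e he
        by_cases h1 : l = i
        · rcases hsubAB e (Or.inl (by rwa [h1, hM₂i] at he)) with h | h
          exacts [hsub i h, hsub j h]
        by_cases h2 : l = j
        · rcases hsubAB e (Or.inr (by rwa [h2, hM₂j] at he)) with h | h
          exacts [hsub i h, hsub j h]
        · exact hsub l (by rwa [hM₂other l h1 h2] at he)
      have hmatch2 : ∀ l, IsMatchingEdgeSet (M₂ l) := by
        intro l
        by_cases h1 : l = i; · rw [h1, hM₂i]; exact hA'm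
        by_cases h2 : l = j; · rw [h2, hM₂j]; exact hB'm
        · rw [hM₂other l h1 h2]; exact hmatch l
      have hdisj2 : ∀ l m, l ≠ m → Disjoint (M₂ l) (M₂ m) := by
        have key : ∀ l, l ≠ i → l ≠ j → Disjoint A' (M l) ∧ Disjoint B' (M l) := by
          intro l h1 h2
          constructor <;> rw [Finset.disjoint_left] <;> intro e he he'
          · rcases hsubAB e (Or.inl he) with h | h
            · exact Finset.disjoint_left.mp (hdisj i l (Ne.symm h1)) h he'
            · exact Finset.disjoint_left.mp (hdisj j l (Ne.symm h2)) h he'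
          · rcases hsubAB e (Or.inr he) with h | h
            · exact Finset.disjoint_left.mp (hdisj i l (Ne.symm h1)) h he'
            · exact Finset.disjoint_left.mp (hdisj j l (Ne.symm h2)) h he'
        intro l m hlm
        have repr : ∀ l, (M₂ l = A' ∧ l = i) ∨ (M₂ l = B' ∧ l = j) ∨
            (M₂ l = M l ∧ l ≠ i ∧ l ≠ j) := by
          intro l
          by_cases h1 : l = i
          · exact Or.inl ⟨by rw [h1, hM₂i], h1⟩
          by_cases h2 : l = j
          · exact Or.inr (Or.inl ⟨by rw [h2, hM₂j], h2⟩)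
          · exact Or.inr (Or.inr ⟨hM₂other l h1 h2, h1, h2⟩)
        rcases repr l with ⟨el, rfl⟩ | ⟨el, rfl⟩ | ⟨el, h1, h2⟩ <;>
          rcases repr m with ⟨em, rfl⟩ | ⟨em, rfl⟩ | ⟨em, g1, g2⟩
        · exact absurd rfl hlm
        · rw [el, em]; exact hA'B'
        · rw [el, em]; exact (key m g1 g2).1
        · rw [el, em]; exact hA'B'.symm
        · exact absurd rfl hlm
        · rw [el, em]; exact (key m g1 g2).2
        · rw [el, em]; exact (key l h1 h2).1.symm
        · rw [el, em]; exact (key l h1 h2).2.symm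
        · rw [el, em]; exact hdisj l m hlm
      -- cardinalities
      have hci : (M₂ i).card + 1 = (M i).card := by rw [hM₂i]; exact hcardA
      have hcj : (M₂ j).card = (M j).card + 1 := by rw [hM₂j]; exact hcardB
      have hsum : ∀ F : Fin k → ℕ,
          ∑ l, F l = F i + (F j + ∑ l ∈ (Finset.univ.erase i).erase j, F l) := by
        intro F
        rw [Finset.add_sum_erase _ F (Finset.mem_erase.mpr ⟨hne.symm, Finset.mem_univ j⟩),
          Finset.add_sum_erase _ F (Finset.mem_univ i)]
      have hrest : ∑ l ∈ (Finset.univ.erase i).erase j, (M₂ l).card ^ 2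
          = ∑ l ∈ (Finset.univ.erase i).erase j, (M l).card ^ 2 := by
        refine Finset.sum_congr rfl fun l hl => ?_
        have h2 := (Finset.mem_erase.mp hl).1
        have h1 := (Finset.mem_erase.mp (Finset.mem_erase.mp hl).2).1
        rw [hM₂other l h1 h2]
      have hΦ2 : ∑ l, (M₂ l).card ^ 2 < ∑ l, (M l).card ^ 2 := by
        rw [hsum (fun l => (M₂ l).card ^ 2), hsum (fun l => (M l).card ^ 2)]
        rw [hrest]
        nlinarith [hci, hcj, hc, Finset.card_le_card (Finset.subset_univ (M i))]
      obtain ⟨M', h1, h2, h3, h4, h5⟩ := ih M₂ hsub2 hmatch2 hdisj2 (by omega)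
      refine ⟨M', h1, h2, h3, ?_, h5⟩
      rw [h4]
      ext e
      simp only [Finset.mem_biUnion, Finset.mem_univ, true_and]
      constructor
      · rintro ⟨l, hl⟩
        by_cases h1' : l = i
        · rcases hsubAB e (Or.inl (by rwa [h1', hM₂i] at hl)) with h | h
          exacts [⟨i, h⟩, ⟨j, h⟩]
        by_cases h2' : l = j
        · rcases hsubAB e (Or.inr (by rwa [h2', hM₂j] at hl)) with h | h
          exacts [⟨i, h⟩, ⟨j, h⟩]
        · exact ⟨l, by rwa [hM₂other l h1' h2'] at hl⟩
      · rintro ⟨l, hl⟩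
        by_cases h1' : l = i
        · rcases hsubAB' e (Or.inl (h1' ▸ hl)) with h | h
          exacts [⟨i, by rwa [hM₂i]⟩, ⟨j, by rwa [hM₂j]⟩]
        by_cases h2' : l = j
        · rcases hsubAB' e (Or.inr (h2' ▸ hl)) with h | h
          exacts [⟨i, by rwa [hM₂i]⟩, ⟨j, by rwa [hM₂j]⟩]
        · exact ⟨l, by rwa [hM₂other l h1' h2']⟩

end Balancing

/-- Edge-disjoint matchings in a graph can be rebalanced into edge-disjoint matchings with
the same union whose sizes pairwise differ by at most one. -/
theorem balancing_matchings {V : Type*} [Fintype V] [DecidableEq V]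
    (G : SimpleGraph V) [DecidableRel G.Adj] (k : ℕ) (M : Fin k → Finset (Sym2 V))
    (hsub : ∀ i, M i ⊆ G.edgeFinset)
    (hmatch : ∀ i, IsMatchingEdgeSet (M i))
    (hdisj : ∀ i j, i ≠ j → Disjoint (M i) (M j)) :
    ∃ M' : Fin k → Finset (Sym2 V),
      (∀ i, M' i ⊆ G.edgeFinset) ∧
      (∀ i, IsMatchingEdgeSet (M' i)) ∧
      (∀ i j, i ≠ j → Disjoint (M' i) (M' j)) ∧
      Finset.univ.biUnion M' = Finset.univ.biUnion M ∧
      (∀ i j, (M' i).card ≤ (M' j).card + 1) := by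
  exact Balancing.main_aux G k (∑ i, (M i).card ^ 2 + 1) M hsub hmatch hdisj (by omega)
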